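/- Every hypergraph H in the class ℋ_2 has chromatic index q(H) = 3, and any two hypergraphs in ℋ_2 are isomorphic (i.e. ℋ_2 contains a single hypergraph up to isomorphism, namely the complete graph K₄ with one edge removed). -/

import Mathlib

open Finset

variable {V : Type*}

/-- The degree of a vertex `x`: number of hyperedges containing `x`. -/
def hyperDeg [DecidableEq V] (E : Finset (Finset V)) (x : V) : ℕ :=
  (E.filter fun e => x ∈ e).card

/-- A hypergraph is linear if two distinct hyperedges share at most one vertex. -/
def Linear [DecidableEq V] (E : Finset (Finset V)) : Prop :=
  ∀ e ∈ E, ∀ f ∈ E, e ≠ f → (e ∩ f).card ≤ 1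

/-- The degree of a hyperedge `e`: number of other hyperedges meeting `e`. -/
def edgeDeg [DecidableEq V] (E : Finset (Finset V)) (e : Finset V) : ℕ :=
  (E.filter fun a => a ≠ e ∧ (a ∩ e).Nonempty).card

/-- Degree of a vertex in the 2-section of the hypergraph. -/
def deg2 [Fintype V] [DecidableEq V] (E : Finset (Finset V)) (x : V) : ℕ :=
  (Finset.univ.filter fun y => y ≠ x ∧ ∃ e ∈ E, x ∈ e ∧ y ∈ e).card

/-- Maximum degree of the 2-section. -/
def maxDeg2 [Fintype V] [DecidableEq V] (E : Finset (Finset V)) : ℕ :=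
  Finset.univ.sup (deg2 E)

/-- Minimum degree of the 2-section. -/
noncomputable def minDeg2 [Fintype V] [DecidableEq V] (E : Finset (Finset V)) : ℕ :=
  sInf (Set.range (deg2 E))

/-- Maximum vertex degree of the hypergraph. -/
def maxDeg [Fintype V] [DecidableEq V] (E : Finset (Finset V)) : ℕ :=
  Finset.univ.sup (hyperDeg E)

/-- A proper hyperedge coloring with `q` colors. -/
def ColorableWith [DecidableEq V] (E : Finset (Finset V)) (q : ℕ) : Prop :=
  ∃ c : Finset V → Fin q, ∀ e ∈ E, ∀ f ∈ E, e ≠ f → (e ∩ f).Nonempty → c e ≠ c f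

/-- The chromatic index: least number of colors in a proper hyperedge coloring. -/
noncomputable def chromIndex [DecidableEq V] (E : Finset (Finset V)) : ℕ :=
  sInf {q | ColorableWith E q}


section Aux
open Finset

variable {W W' : Type*} [Fintype W] [DecidableEq W] [Fintype W'] [DecidableEq W']

/-- Any hypergraph satisfying the cardinality hypotheses is all pairs minus one. -/
lemma struct_lemma (E : Finset (Finset W)) (huni : ∀ e ∈ E, e.card = 2)
    (hV : Fintype.card W = 4) (hEcard : E.card = 5) :
    ∃ m : Finset W, m.card = 2 ∧ E = (Finset.univ.powersetCard 2).erase m := by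
  classical
  set P : Finset (Finset W) := Finset.univ.powersetCard 2 with hP
  have hsub : E ⊆ P := by
    intro e he
    simp only [hP, Finset.mem_powersetCard]
    exact ⟨Finset.subset_univ e, huni e he⟩
  have hPcard : P.card = 6 := by
    rw [hP, Finset.card_powersetCard, Finset.card_univ, hV]; rfl
  have hdiff : (P \ E).card = 1 := by
    rw [Finset.card_sdiff_of_subset hsub, hPcard, hEcard]
  obtain ⟨m, hm⟩ := Finset.card_eq_one.mp hdiff
  have hmP : m ∈ P ∧ m ∉ E := by
    have : m ∈ P \ E := by rw [hm]; exact Finset.mem_singleton_self m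
    simpa using this
  refine ⟨m, ?_, ?_⟩
  · have := hmP.1
    simp only [hP, Finset.mem_powersetCard] at this
    exact this.2
  · ext e
    constructor
    · intro he
      refine Finset.mem_erase.mpr ⟨?_, hsub he⟩
      rintro rfl; exact hmP.2 he
    · intro he
      obtain ⟨hne, heP⟩ := Finset.mem_erase.mp he
      by_contra heE
      have : e ∈ P \ E := Finset.mem_sdiff.mpr ⟨heP, heE⟩
      rw [hm] at this
      exact hne (Finset.mem_singleton.mp this)

/-- An equivalence mapping a given finset of matching cardinality to another. -/
lemma exists_equiv_image (h : Fintype.card W = Fintype.card W')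
    (m : Finset W) (m' : Finset W') (hm : m.card = m'.card) :
    ∃ f : W ≃ W', m.image f = m' := by
  classical
  have h1 : Fintype.card {x // x ∈ m} = Fintype.card {x // x ∈ m'} := by
    simp [Fintype.card_coe, hm]
  have h2 : Fintype.card {x // x ∉ m} = Fintype.card {x // x ∉ m'} := by
    have a1 : Fintype.card {x // ¬ x ∈ m} = Fintype.card W - Fintype.card {x // x ∈ m} :=
      Fintype.card_subtype_compl _
    have a2 : Fintype.card {x // ¬ x ∈ m'} = Fintype.card W' - Fintype.card {x // x ∈ m'} :=
      Fintype.card_subtype_compl _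
    rw [a1, a2, h, h1]
  let e1 : {x // x ∈ m} ≃ {x // x ∈ m'} := Fintype.equivOfCardEq h1
  let e2 : {x // x ∉ m} ≃ {x // x ∉ m'} := Fintype.equivOfCardEq h2
  let f : W ≃ W' :=
    (Equiv.sumCompl (· ∈ m)).symm.trans ((Equiv.sumCongr e1 e2).trans (Equiv.sumCompl (· ∈ m')))
  refine ⟨f, ?_⟩
  have hsub : m.image f ⊆ m' := by
    intro y hy
    obtain ⟨x, hx, rfl⟩ := Finset.mem_image.mp hy
    have : f x = (e1 ⟨x, hx⟩ : W') := by
      simp [f, Equiv.sumCompl_symm_apply_of_pos hx]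
    rw [this]
    exact (e1 ⟨x, hx⟩).2
  have hcard : m'.card ≤ (m.image f).card := by
    rw [Finset.card_image_of_injective _ f.injective, hm]
  exact Finset.eq_of_subset_of_card_le hsub hcard

/-- Edge correspondence for the "all pairs minus m" hypergraphs. -/
lemma edge_iff (hV' : Fintype.card W' = 4) (f : W ≃ W') (m : Finset W) (m' : Finset W')
    (hf : m.image f = m') (e : Finset W) :
    e ∈ (Finset.univ.powersetCard 2).erase m ↔
      e.image f ∈ (Finset.univ.powersetCard 2).erase m' := by
  classical
  simp only [Finset.mem_erase, Finset.mem_powersetCard]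
  constructor
  · rintro ⟨hne, _, hc⟩
    refine ⟨?_, Finset.subset_univ _, by rw [Finset.card_image_of_injective _ f.injective, hc]⟩
    rw [← hf]
    intro hcontra
    exact hne (Finset.image_injective f.injective hcontra)
  · rintro ⟨hne, _, hc⟩
    refine ⟨?_, Finset.subset_univ _, by rwa [Finset.card_image_of_injective _ f.injective] at hc⟩
    rintro rfl
    exact hne hf

/-- Colorability transfers along an edge-preserving equivalence. -/
lemma colorable_iff (f : W ≃ W') (E : Finset (Finset W)) (E' : Finset (Finset W'))
    (h : ∀ e : Finset W, e ∈ E ↔ e.image f ∈ E') (q : ℕ) :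
    ColorableWith E q ↔ ColorableWith E' q := by
  classical
  constructor
  · rintro ⟨c, hc⟩
    refine ⟨fun e' => c (e'.image f.symm), ?_⟩
    intro e' he' g' hg' hne hint
    have key : ∀ a : Finset W', (a.image f.symm).image f = a := by
      intro a
      rw [Finset.image_image]
      simp
    have h1 : e'.image f.symm ∈ E := (h _).mpr (by rw [key]; exact he')
    have h2 : g'.image f.symm ∈ E := (h _).mpr (by rw [key]; exact hg')
    refine hc _ h1 _ h2 ?_ ?_
    · intro hcontra
      exact hne (by rw [← key e', hcontra, key])
    · obtain ⟨x, hx⟩ := hint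
      refine ⟨f.symm x, ?_⟩
      simp only [Finset.mem_inter] at hx ⊢
      exact ⟨Finset.mem_image_of_mem _ hx.1, Finset.mem_image_of_mem _ hx.2⟩
  · rintro ⟨c, hc⟩
    refine ⟨fun e => c (e.image f), ?_⟩
    intro e he g hg hne hint
    refine hc _ ((h e).mp he) _ ((h g).mp hg) ?_ ?_
    · intro hcontra
      exact hne (Finset.image_injective f.injective hcontra)
    · obtain ⟨x, hx⟩ := hint
      refine ⟨f x, ?_⟩
      simp only [Finset.mem_inter] at hx ⊢
      exact ⟨Finset.mem_image_of_mem _ hx.1, Finset.mem_image_of_mem _ hx.2⟩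

/-- The model hypergraph on `Fin 4`. -/
def modelE : Finset (Finset (Fin 4)) := (Finset.univ.powersetCard 2).erase {0, 1}

/-- Explicit 3-coloring of the model. -/
def modelC : Finset (Fin 4) → Fin 3 := fun e =>
  if e = {0, 2} ∨ e = {1, 3} then 0 else if e = {0, 3} ∨ e = {1, 2} then 1 else 2

lemma model_colorable : ColorableWith modelE 3 :=
  ⟨modelC, by decide⟩

lemma model_lower {q : ℕ} (h : ColorableWith modelE q) : 3 ≤ q := by
  obtain ⟨c, hc⟩ := h
  have m1 : ({0, 2} : Finset (Fin 4)) ∈ modelE := by decide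
  have m2 : ({0, 3} : Finset (Fin 4)) ∈ modelE := by decide
  have m3 : ({2, 3} : Finset (Fin 4)) ∈ modelE := by decide
  have h12 := hc _ m1 _ m2 (by decide) ⟨0, by decide⟩
  have h13 := hc _ m1 _ m3 (by decide) ⟨2, by decide⟩
  have h23 := hc _ m2 _ m3 (by decide) ⟨3, by decide⟩
  have hcard : ({c {0, 2}, c {0, 3}, c {2, 3}} : Finset (Fin q)).card = 3 := by
    rw [Finset.card_insert_of_notMem (by simp [h12, h13]),
      Finset.card_insert_of_notMem (by simp [h23])]
    rfl
  calc 3 = ({c {0, 2}, c {0, 3}, c {2, 3}} : Finset (Fin q)).card := hcard.symm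
    _ ≤ Fintype.card (Fin q) := Finset.card_le_univ _
    _ = q := Fintype.card_fin q

lemma model_chrom : chromIndex modelE = 3 := by
  apply le_antisymm
  · exact Nat.sInf_le model_colorable
  · exact le_csInf ⟨3, model_colorable⟩ fun q hq => model_lower hq

end Aux

theorem stmt15 {V V' : Type*} [Fintype V] [DecidableEq V] [Fintype V'] [DecidableEq V']
    (E : Finset (Finset V)) (E' : Finset (Finset V'))
    (hlin : Linear E) (huni : ∀ e ∈ E, e.card = 2)
    (hV : Fintype.card V = 4) (hEcard : E.card = 5)
    (he₀ : ∃ e₀ ∈ E, (∀ x ∈ e₀, hyperDeg E x = 3) ∧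
      ∀ x : V, x ∉ e₀ → 2 ≤ hyperDeg E x)
    (hlin' : Linear E') (huni' : ∀ e ∈ E', e.card = 2)
    (hV' : Fintype.card V' = 4) (hEcard' : E'.card = 5)
    (he₀' : ∃ e₀ ∈ E', (∀ x ∈ e₀, hyperDeg E' x = 3) ∧
      ∀ x : V', x ∉ e₀ → 2 ≤ hyperDeg E' x) :
    chromIndex E = 3 ∧ ∃ f : V ≃ V', ∀ e : Finset V, e ∈ E ↔ e.image f ∈ E' := by
  classical
  obtain ⟨m, hm, hEeq⟩ := struct_lemma E huni hV hEcard
  obtain ⟨m', hm', hEeq'⟩ := struct_lemma E' huni' hV' hEcard'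
  constructor
  · -- chromatic index
    obtain ⟨g, hg⟩ := exists_equiv_image (W' := Fin 4) (by simp [hV]) m ({0, 1} : Finset (Fin 4))
      (by rw [hm]; decide)
    have hiff : ∀ e : Finset V, e ∈ E ↔ e.image g ∈ modelE := by
      intro e
      rw [hEeq]
      exact edge_iff (by simp) g m _ hg e
    have : chromIndex E = chromIndex modelE := by
      unfold chromIndex
      congr 1
      ext q
      exact colorable_iff g E modelE hiff q
    rw [this, model_chrom]
  · obtain ⟨f, hf⟩ := exists_equiv_image (by rw [hV, hV']) m m' (by rw [hm, hm'])
    refine ⟨f, fun e => ?_⟩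
    rw [hEeq, hEeq']
    exact edge_iff hV' f m m' hf e
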